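/- arXiv:2309.00967 — 2 statements merged into one kernel-verified Lean document; each statement's English description precedes it below -/
import Mathlib

section
/- The real Okubo algebra 𝒪 is flexible, and more precisely x*(y*x) = (x*y)*x = n(x)·y for all x, y ∈ 𝒪. -/
open Matrix Complex

noncomputable section

/-- `3 × 3` complex matrices. -/
abbrev M3 : Type := Matrix (Fin 3) (Fin 3) ℂ

/-- The real Okubo algebra: `3 × 3` traceless Hermitian complex matrices. -/
def Okubo : Set M3 := {x | x.IsHermitian ∧ x.trace = 0}

/-- The constant `μ = (3 + i√3)/6`. -/
def okMu : ℂ := (3 + (Real.sqrt 3 : ℂ) * Complex.I) / 6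

/-- The Okubo product `x*y = μ·(xy) + μ̄·(yx) − (1/3)Tr(xy)·Id`. -/
def omul (x y : M3) : M3 :=
  okMu • (x * y) + (starRingEnd ℂ) okMu • (y * x) - ((1 / 3 : ℂ) * (x * y).trace) • (1 : M3)

/-- The Okubic norm `n(x) = (1/6)Tr(x²)` (real-valued on Hermitian matrices). -/
def onorm (x : M3) : ℝ := (1 / 6) * ((x * x).trace).re

/-- The polar form `⟨x,y⟩ = n(x+y) − n(x) − n(y)` of the Okubic norm. -/
def opolar (x y : M3) : ℝ := onorm (x + y) - onorm x - onorm y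

/- ### Auxiliary lemmas -/

lemma ok_hs3 : ((Real.sqrt 3 : ℝ) : ℂ)^2 = 3 := by
  norm_cast
  rw [Real.sq_sqrt]; norm_num

lemma ok_hconj : (starRingEnd ℂ) okMu = (3 - (Real.sqrt 3 : ℂ) * Complex.I) / 6 := by
  simp [okMu, map_div₀, map_ofNat, Complex.conj_I, Complex.conj_ofReal]
  ring

lemma ok_mu_add : okMu + (starRingEnd ℂ) okMu = 1 := by
  rw [ok_hconj, okMu]; ring

lemma ok_mu_mul : okMu * (starRingEnd ℂ) okMu = 1/3 := by
  rw [ok_hconj, okMu]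
  linear_combination (-Complex.I^2/36) * ok_hs3 + (-1/12 : ℂ) * Complex.I_sq

lemma ok_mu_sq : okMu^2 + ((starRingEnd ℂ) okMu)^2 = 1/3 := by
  linear_combination (okMu + (starRingEnd ℂ) okMu + 1) * ok_mu_add - 2 * ok_mu_mul

lemma ok_diag3 (x : M3) (hx : x.trace = 0) : x 2 2 = -(x 0 0) - x 1 1 := by
  simp [Matrix.trace, Fin.sum_univ_three, Matrix.diag] at hx
  linear_combination hx

/-- Linearized Cayley–Hamilton for traceless `3×3` matrices. -/
lemma ok_CH3 (x y : M3) (hx : x.trace = 0) (hy : y.trace = 0) :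
    x*x*y + x*y*x + y*(x*x)
      = (x*y).trace • x + ((x*x).trace/2) • y + (x*x*y).trace • (1 : M3) := by
  have hx' := ok_diag3 x hx
  have hy' := ok_diag3 y hy
  ext i j
  fin_cases i <;> fin_cases j <;>
    simp [Matrix.mul_apply, Matrix.add_apply, Matrix.smul_apply, Matrix.one_apply,
      Matrix.trace, Matrix.diag, Fin.sum_univ_three, hx', hy', smul_eq_mul] <;> ring

lemma ok_expand1 (x y : M3) (hx : x.trace = 0) :
    omul (omul x y) x
      = (okMu^2 + (starRingEnd ℂ okMu)^2) • (x*y*x)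
        + (okMu * starRingEnd ℂ okMu) • (x*x*y + y*(x*x))
        - ((okMu + starRingEnd ℂ okMu) * ((1/3) * (x*y).trace)) • x
        - ((okMu + starRingEnd ℂ okMu) * ((1/3) * (x*x*y).trace)) • (1 : M3) := by
  have t1 : (x*y*x).trace = (x*x*y).trace := Matrix.trace_mul_cycle x y x
  have t2 : (y*x*x).trace = (x*x*y).trace := by
    rw [Matrix.trace_mul_cycle, Matrix.trace_mul_cycle]
  have t1' : (x*(y*x)).trace = (x*x*y).trace := by rw [← Matrix.mul_assoc, t1]
  have t2' : (y*(x*x)).trace = (x*x*y).trace := by rw [← Matrix.mul_assoc, t2]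
  simp only [omul, Matrix.sub_mul, Matrix.add_mul, Matrix.mul_sub, Matrix.mul_add,
    smul_mul_assoc, mul_smul_comm, Matrix.one_mul, Matrix.mul_one,
    trace_smul, trace_sub, trace_add, smul_eq_mul, trace_one, hx, mul_zero,
    Matrix.mul_assoc, t1, t2, t1', t2']
  module

lemma ok_expand2 (x y : M3) (hx : x.trace = 0) :
    omul x (omul y x)
      = (okMu^2 + (starRingEnd ℂ okMu)^2) • (x*y*x)
        + (okMu * starRingEnd ℂ okMu) • (x*x*y + y*(x*x))
        - ((okMu + starRingEnd ℂ okMu) * ((1/3) * (x*y).trace)) • x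
        - ((okMu + starRingEnd ℂ okMu) * ((1/3) * (x*x*y).trace)) • (1 : M3) := by
  have t0 : (y*x).trace = (x*y).trace := Matrix.trace_mul_comm y x
  have t1 : (x*y*x).trace = (x*x*y).trace := Matrix.trace_mul_cycle x y x
  have t2 : (y*x*x).trace = (x*x*y).trace := by
    rw [Matrix.trace_mul_cycle, Matrix.trace_mul_cycle]
  have t1' : (x*(y*x)).trace = (x*x*y).trace := by rw [← Matrix.mul_assoc, t1]
  have t2' : (y*(x*x)).trace = (x*x*y).trace := by rw [← Matrix.mul_assoc, t2]
  have t3' : (x*(x*y)).trace = (x*x*y).trace := by rw [← Matrix.mul_assoc]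
  simp only [omul, Matrix.sub_mul, Matrix.add_mul, Matrix.mul_sub, Matrix.mul_add,
    smul_mul_assoc, mul_smul_comm, Matrix.one_mul, Matrix.mul_one,
    trace_smul, trace_sub, trace_add, smul_eq_mul, trace_one, hx, mul_zero,
    Matrix.mul_assoc, t0, t1, t2, t1', t2', t3']
  module

lemma ok_trace_real (x : M3) (hx : x.IsHermitian) :
    (((x*x).trace.re : ℝ) : ℂ) = (x*x).trace := by
  have h : (x*x).IsHermitian := by
    unfold Matrix.IsHermitian
    rw [Matrix.conjTranspose_mul, hx.eq]
  have him : ((x*x).trace).im = 0 := by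
    rw [← Complex.conj_eq_iff_im]
    calc (starRingEnd ℂ) ((x*x).trace) = ((x*x)ᴴ).trace := (Matrix.trace_conjTranspose (x*x)).symm
    _ = (x*x).trace := by rw [h.eq]
  exact Complex.ext (by simp) (by simp [him])

lemma ok_smul_real (r : ℝ) (y : M3) : r • y = ((r : ℂ)) • y := by
  ext i j
  simp [Complex.real_smul]

/-- The real Okubo algebra is flexible, and more precisely
`x*(y*x) = (x*y)*x = n(x) • y` for all `x, y ∈ 𝒪`. -/
theorem okubo_paper_stmt6 :
    ∀ x ∈ Okubo, ∀ y ∈ Okubo,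
      omul x (omul y x) = omul (omul x y) x ∧ omul (omul x y) x = onorm x • y := by
  rintro x ⟨hxh, hxt⟩ y ⟨hyh, hyt⟩
  constructor
  · rw [ok_expand1 x y hxt, ok_expand2 x y hxt]
  · rw [ok_expand1 x y hxt, ok_mu_sq, ok_mu_mul, ok_mu_add]
    have hnorm : onorm x • y = (((x*x).trace / 6 : ℂ)) • y := by
      rw [ok_smul_real]
      congr 1
      rw [← ok_trace_real x hxh]
      unfold onorm
      push_cast
      ring
    rw [hnorm]
    have ch := ok_CH3 x y hxt hyt
    linear_combination (norm := module) (1/3 : ℂ) • ch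

end
end

section
/- For every x, y in the real Okubo algebra 𝒪, the vector (x, y, x*y; n(y), n(x), 1) ∈ 𝒪³×ℝ³ is a Veronese vector, i.e. it satisfies n(y)·x = y*(x*y), n(x)·y = (x*y)*x, 1·(x*y) = x*y, n(x) = n(x)·1, n(y) = 1·n(y), and n(x*y) = n(y)·n(x). -/
open Matrix Complex

noncomputable section

/-- `(x₁,x₂,x₃;λ₁,λ₂,λ₃) ∈ 𝒪³×ℝ³` is a Veronese vector. -/
def IsVeronese (x₁ x₂ x₃ : M3) (l₁ l₂ l₃ : ℝ) : Prop :=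
  l₁ • x₁ = omul x₂ x₃ ∧ l₂ • x₂ = omul x₃ x₁ ∧ l₃ • x₃ = omul x₁ x₂ ∧
  onorm x₁ = l₂ * l₃ ∧ onorm x₂ = l₃ * l₁ ∧ onorm x₃ = l₁ * l₂

lemma mu_conj : (starRingEnd ℂ) okMu = 1 - okMu := by
  simp [okMu, map_div₀, map_add, map_ofNat, Complex.conj_I, Complex.conj_ofReal]
  ring

lemma mu_sq : okMu * okMu = okMu - 1/3 := by
  have h2 : (Real.sqrt 3 : ℂ)^2 = 3 := by
    rw [← Complex.ofReal_pow, Real.sq_sqrt (by norm_num)]; norm_num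
  have hI2 := Complex.I_sq
  unfold okMu
  field_simp
  linear_combination (3*Complex.I^2) * h2 + 9*hI2

lemma trace3 (x : M3) : x.trace = x 0 0 + x 1 1 + x 2 2 := by
  simp [Matrix.trace, Fin.sum_univ_three, Matrix.diag]

/-- The linearization of the Cayley–Hamilton identity for traceless `3 × 3` matrices. -/
lemma keyCH (x y : M3) (hx : x.trace = 0) (hy : y.trace = 0) :
    y*(x*y) + y*(y*x) + x*(y*y)
      = (x*y).trace • y + ((1/2:ℂ)*(y*y).trace) • x + (x*(y*y)).trace • (1:M3) := by
  have e1 : x 2 2 = -(x 0 0 + x 1 1) := by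
    rw [trace3] at hx; linear_combination hx
  have e2 : y 2 2 = -(y 0 0 + y 1 1) := by
    rw [trace3] at hy; linear_combination hy
  ext i j
  fin_cases i <;> fin_cases j <;>
    simp [Matrix.mul_apply, Fin.sum_univ_three, trace3, Matrix.one_apply,
      Matrix.smul_apply, smul_eq_mul] <;>
    rw [e1, e2] <;> ring

lemma tcyc1 (x y : M3) : (y*(x*y)).trace = (x*(y*y)).trace := by
  simp [trace3, Matrix.mul_apply, Fin.sum_univ_three]; ring

lemma tcyc2 (x y : M3) : (y*(y*x)).trace = (x*(y*y)).trace := by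
  simp [trace3, Matrix.mul_apply, Fin.sum_univ_three]; ring

lemma tcyc3 (x y : M3) : (y*x).trace = (x*y).trace := Matrix.trace_mul_comm y x

lemma tcyc4 (x y : M3) : (y*(x*(y*x))).trace = (x*(y*(x*y))).trace := by
  simp [trace3, Matrix.mul_apply, Fin.sum_univ_three]; ring

lemma tcyc5 (x y : M3) : (x*(y*(y*x))).trace = (x*(x*(y*y))).trace := by
  simp [trace3, Matrix.mul_apply, Fin.sum_univ_three]; ring

lemma tcyc6 (x y : M3) : (y*(x*(x*y))).trace = (x*(x*(y*y))).trace := by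
  simp [trace3, Matrix.mul_apply, Fin.sum_univ_three]; ring

lemma traceCH (x y : M3) (hx : x.trace = 0) (hy : y.trace = 0) :
    (x*(y*(x*y))).trace + 2*(x*(x*(y*y))).trace
      = (x*y).trace * (x*y).trace + (1/2:ℂ) * (x*x).trace * (y*y).trace := by
  have e1 : x 2 2 = -(x 0 0 + x 1 1) := by
    rw [trace3] at hx; linear_combination hx
  have e2 : y 2 2 = -(y 0 0 + y 1 1) := by
    rw [trace3] at hy; linear_combination hy
  simp only [trace3, Matrix.mul_apply, Fin.sum_univ_three]
  rw [e1, e2]; ring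

lemma P2 (x y : M3) (hx : x.trace = 0) (hy : y.trace = 0) :
    omul y (omul x y) = ((1/6:ℂ) * (y*y).trace) • x := by
  have hk := keyCH x y hx hy
  have step : omul y (omul x y)
      = (1/3:ℂ) • (y*(x*y) + y*(y*x) + x*(y*y))
        - ((1/3:ℂ)*(x*y).trace) • y - ((1/3:ℂ)*(x*(y*y)).trace) • (1:M3) := by
    simp only [omul, Matrix.mul_add, Matrix.add_mul, Matrix.mul_sub, Matrix.sub_mul,
      Matrix.mul_smul, Matrix.smul_mul, Matrix.mul_one, Matrix.one_mul,
      Matrix.trace_add, Matrix.trace_sub, Matrix.trace_smul, Matrix.trace_one,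
      smul_smul, smul_eq_mul, Matrix.mul_assoc, hy, tcyc1, tcyc2, tcyc3,
      mu_conj]
    match_scalars <;>
      first
        | linear_combination 2*mu_sq
        | linear_combination -mu_sq
        | linear_combination mu_sq
        | ring
  rw [step, hk]
  match_scalars <;> ring

lemma P3 (x y : M3) (hx : x.trace = 0) (hy : y.trace = 0) :
    omul (omul x y) x = ((1/6:ℂ) * (x*x).trace) • y := by
  have hk := keyCH y x hy hx
  have step : omul (omul x y) x
      = (1/3:ℂ) • (x*(y*x) + x*(x*y) + y*(x*x))
        - ((1/3:ℂ)*(y*x).trace) • x - ((1/3:ℂ)*(y*(x*x)).trace) • (1:M3) := by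
    simp only [omul, Matrix.mul_add, Matrix.add_mul, Matrix.mul_sub, Matrix.sub_mul,
      Matrix.mul_smul, Matrix.smul_mul, Matrix.mul_one, Matrix.one_mul,
      Matrix.trace_add, Matrix.trace_sub, Matrix.trace_smul, Matrix.trace_one,
      smul_smul, smul_eq_mul, Matrix.mul_assoc, hx, tcyc1, tcyc2, tcyc3,
      mu_conj]
    match_scalars <;>
      first
        | linear_combination 2*mu_sq
        | linear_combination -mu_sq
        | linear_combination mu_sq
        | linear_combination (-okMu/3) * (tcyc1 y x)
        | ring
  rw [step, hk]
  match_scalars <;> ring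

lemma traceP (x y : M3) (hx : x.trace = 0) (hy : y.trace = 0) :
    (omul x y * omul x y).trace = (1/6:ℂ) * (x*x).trace * (y*y).trace := by
  have hq := traceCH x y hx hy
  simp only [omul, Matrix.mul_add, Matrix.add_mul, Matrix.mul_sub, Matrix.sub_mul,
    Matrix.mul_smul, Matrix.smul_mul, Matrix.mul_one, Matrix.one_mul,
    Matrix.trace_add, Matrix.trace_sub, Matrix.trace_smul, Matrix.trace_one,
    smul_smul, smul_eq_mul, Matrix.mul_assoc, tcyc3, tcyc4, tcyc5, tcyc6,
    Fintype.card_fin, Nat.cast_ofNat, mu_conj]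
  linear_combination (2*(x*(y*(x*y))).trace - 2*(x*(x*(y*y))).trace) * mu_sq + (1/3:ℂ) * hq

lemma herm_real (x : M3) (h : x.IsHermitian) :
    (((x*x).trace.re : ℝ) : ℂ) = (x*x).trace := by
  have hs : (starRingEnd ℂ) ((x*x).trace) = (x*x).trace := by
    calc (starRingEnd ℂ) ((x*x).trace) = star ((x*x).trace) := rfl
      _ = ((x*x)ᴴ).trace := (Matrix.trace_conjTranspose _).symm
      _ = (xᴴ*xᴴ).trace := by rw [Matrix.conjTranspose_mul]
      _ = (x*x).trace := by rw [h.eq]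
  exact Complex.conj_eq_iff_re.mp hs

lemma onorm_coe (x : M3) (h : x.IsHermitian) :
    ((onorm x : ℝ) : ℂ) = (1/6 : ℂ) * (x*x).trace := by
  rw [onorm]
  push_cast
  rw [herm_real x h]

lemma rsmul (r : ℝ) (m : M3) : r • m = ((r : ℂ)) • m := by
  ext i j
  simp [Matrix.smul_apply, Complex.real_smul]

/-- For every `x, y ∈ 𝒪`, the vector
`(x, y, x*y; n(y), n(x), 1)` is a Veronese vector. -/
theorem okubo_paper_stmt13 :
    ∀ x ∈ Okubo, ∀ y ∈ Okubo,
      IsVeronese x y (omul x y) (onorm y) (onorm x) 1 := by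
  intro x hx y hy
  obtain ⟨hx1, hx2⟩ := hx
  obtain ⟨hy1, hy2⟩ := hy
  refine ⟨?_, ?_, one_smul ℝ _, (mul_one _).symm, (one_mul _).symm, ?_⟩
  · rw [rsmul, onorm_coe y hy1, P2 x y hx2 hy2]
  · rw [rsmul, onorm_coe x hx1, P3 x y hx2 hy2]
  · have h := traceP x y hx2 hy2
    rw [onorm, h, ← herm_real x hx1, ← herm_real y hy1]
    have hc : (1/6 : ℂ) * (((x*x).trace.re : ℝ) : ℂ) * (((y*y).trace.re : ℝ):ℂ)
        = (((1/6 * (x*x).trace.re * (y*y).trace.re : ℝ)) : ℂ) := by push_cast; ring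
    rw [hc, Complex.ofReal_re, onorm, onorm]
    ring

end
end
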